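/- Let n ≥ 1 and let M be a perfect matching of the 2n-point set [n] × {1, 2} chosen uniformly at random. Define a relation on [n] by letting j and k be related whenever M matches some point (j, s) with some point (k, t). Then the expected number of equivalence classes of the transitive-reflexive closure of this relation (i.e. the expected number of connected components of the multigraph on [n] induced by M) equals Σ_{i=1}^{n} 1/(2i − 1), which is at most 2·log n for all sufficiently large n. -/

import Mathlib

namespace Stmt17

variable {V W : Type*}

abbrev Pt (V : Type*) : Type _ := V × Fin 2

def IsPM (f : Pt V → Pt V) : Prop := ∀ x, f (f x) = x ∧ f x ≠ x

abbrev PM (V : Type*) := {f : Pt V → Pt V // IsPM f}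

instance [Fintype V] [DecidableEq V] (f : Pt V → Pt V) : Decidable (IsPM f) :=
  decidable_of_iff (∀ x, f (f x) = x ∧ f x ≠ x) Iff.rfl

lemma fin2_cases : ∀ s : Fin 2, s = 0 ∨ s = 1 := by decide

lemma card_ne_point [Fintype V] [DecidableEq V] :
    Fintype.card {p : Pt (Option V) // p ≠ ((none : Option V), (0 : Fin 2))} =
      2 * Fintype.card V + 1 := by
  have h := Fintype.card_subtype_compl
    (fun x : Pt (Option V) => x = ((none : Option V), (0 : Fin 2)))
  rw [Fintype.card_subtype_eq] at h
  have h2 : Fintype.card (Pt (Option V)) = 2 * Fintype.card V + 2 := by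
    simp only [Fintype.card_prod, Fintype.card_option, Fintype.card_fin]
    omega
  have e : {p : Pt (Option V) // p ≠ ((none : Option V), (0 : Fin 2))} ≃
      {p : Pt (Option V) // ¬ p = ((none : Option V), (0 : Fin 2))} :=
    Equiv.subtypeEquivRight (fun _ => Iff.rfl)
  rw [Fintype.card_congr e, h, h2]
  omega



def Rel (f : Pt V → Pt V) (j k : V) : Prop := ∃ s t : Fin 2, f (j, s) = (k, t)

noncomputable def comp (f : Pt V → Pt V) : ℕ :=
  Nat.card (Quot (Relation.ReflTransGen (Rel f)))

lemma rtg_map {α β : Type*} {r : α → α → Prop} {r' : β → β → Prop} (φ : α → β)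
    (h : ∀ a b, r a b → Relation.ReflTransGen r' (φ a) (φ b)) {a b : α}
    (hab : Relation.ReflTransGen r a b) : Relation.ReflTransGen r' (φ a) (φ b) := by
  induction hab with
  | refl => exact .refl
  | tail _ h2 ih => exact ih.trans (h _ _ h2)

lemma card_quot_eq {α β : Type*} {r : α → α → Prop} {r' : β → β → Prop}
    (φ : α → β) (ψ : β → α)
    (h1 : ∀ a b, r a b → Relation.ReflTransGen r' (φ a) (φ b))
    (h2 : ∀ a b, r' a b → Relation.ReflTransGen r (ψ a) (ψ b))
    (h3 : ∀ a, Relation.ReflTransGen r (ψ (φ a)) a)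
    (h4 : ∀ b, Relation.ReflTransGen r' (φ (ψ b)) b) :
    Nat.card (Quot (Relation.ReflTransGen r)) = Nat.card (Quot (Relation.ReflTransGen r')) := by
  refine Nat.card_congr
    ⟨Quot.lift (fun a => Quot.mk _ (φ a)) (fun a b hab => Quot.sound (rtg_map φ h1 hab)),
     Quot.lift (fun b => Quot.mk _ (ψ b)) (fun a b hab => Quot.sound (rtg_map ψ h2 hab)), ?_, ?_⟩
  · intro q; induction q using Quot.ind with | _ a => exact Quot.sound (h3 a)
  · intro q; induction q using Quot.ind with | _ b => exact Quot.sound (h4 b)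



def ext (g : Pt V → Pt V) : Pt (Option V) → Pt (Option V)
  | (none, s) => (none, s + 1)
  | (some w, s) => (some (g (w, s)).1, (g (w, s)).2)

def restrict (f : Pt (Option V) → Pt (Option V)) (x : Pt V) : Pt V :=
  match f (some x.1, x.2) with
  | (none, _) => x
  | (some w, s) => (w, s)

lemma ext_isPM {g : Pt V → Pt V} (hg : IsPM g) : IsPM (ext g) := by
  rintro ⟨o, s⟩
  cases o with
  | none =>
    constructor
    · show ((none : Option V), s + 1 + 1) = (none, s)
      have : s + 1 + 1 = s := by fin_cases s <;> decide
      rw [this]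
    · show ((none : Option V), s + 1) ≠ (none, s)
      intro h
      have h2 : s + 1 = s := congrArg Prod.snd h
      fin_cases s <;> exact absurd h2 (by decide)
  | some w =>
    constructor
    · show ext g (some (g (w, s)).1, (g (w, s)).2) = _
      show (some (g ((g (w, s)).1, (g (w, s)).2)).1, (g ((g (w, s)).1, (g (w, s)).2)).2) = _
      have h : g (g (w, s)) = (w, s) := (hg (w, s)).1
      rw [show ((g (w, s)).1, (g (w, s)).2) = g (w, s) from rfl, h]
    · show (some (g (w, s)).1, (g (w, s)).2) ≠ (some w, s)
      intro h
      apply (hg (w, s)).2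
      have h1 : (g (w, s)).1 = w := by
        have := congrArg Prod.fst h; simpa using this
      have h2 : (g (w, s)).2 = s := congrArg Prod.snd h
      exact Prod.ext h1 h2

lemma restrict_ext (g : Pt V → Pt V) : restrict (ext g) = g := by
  funext x
  show restrict (ext g) x = g x
  unfold restrict
  have : ext g (some x.1, x.2) = (some (g (x.1, x.2)).1, (g (x.1, x.2)).2) := rfl
  rw [this]

lemma ext_restrict {f : Pt (Option V) → Pt (Option V)} (hf : IsPM f)
    (h0 : f (none, 0) = (none, 1)) : ext (restrict f) = f := by
  have h1 : f (none, 1) = (none, 0) := by rw [← h0, (hf _).1]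
  funext x
  obtain ⟨o, s⟩ := x
  cases o with
  | none =>
    show ((none : Option V), s + 1) = f (none, s)
    match s with
    | 0 => rw [h0]; rfl
    | 1 => rw [h1]; rfl
  | some w =>
    show ext (restrict f) (some w, s) = f (some w, s)
    rcases hfw : f (some w, s) with ⟨o', s'⟩
    cases o' with
    | none =>
      exfalso
      match s' with
      | 0 =>
        have : f (f (some w, s)) = (some w, s) := (hf _).1
        rw [hfw, h0] at this
        exact absurd this (by simp)
      | 1 =>
        have : f (f (some w, s)) = (some w, s) := (hf _).1
        rw [hfw, h1] at this
        exact absurd this (by simp)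
    | some u =>
      show (some (restrict f (w, s)).1, (restrict f (w, s)).2) = _
      have : restrict f (w, s) = (u, s') := by unfold restrict; rw [hfw]
      rw [this]

lemma emb_restrict {f : Pt (Option V) → Pt (Option V)} (hf : IsPM f)
    (h0 : f (none, 0) = (none, 1)) (x : Pt V) :
    (some (restrict f x).1, (restrict f x).2) = f (some x.1, x.2) := by
  conv_rhs => rw [← ext_restrict hf h0]
  rfl

lemma restrict_isPM {f : Pt (Option V) → Pt (Option V)} (hf : IsPM f)
    (h0 : f (none, 0) = (none, 1)) : IsPM (restrict f) := by
  intro x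
  have e1 := emb_restrict hf h0 x
  constructor
  · have e2 := emb_restrict hf h0 (restrict f x)
    rw [e1, (hf _).1] at e2
    injection e2 with h1 h2
    injection h1 with h1
    exact Prod.ext h1 h2
  · intro h
    rw [h] at e1
    exact (hf (some x.1, x.2)).2 e1.symm

variable [DecidableEq V]

def conj (p : Pt (Option V)) (f : Pt (Option V) → Pt (Option V)) :
    Pt (Option V) → Pt (Option V) :=
  fun x => Equiv.swap ((none : Option V), (1 : Fin 2)) p
    (f (Equiv.swap ((none : Option V), (1 : Fin 2)) p x))

lemma conj_isPM {p : Pt (Option V)} {f : Pt (Option V) → Pt (Option V)}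
    (hf : IsPM f) : IsPM (conj p f) := by
  intro x
  constructor
  · show Equiv.swap _ p (f (Equiv.swap _ p (Equiv.swap _ p (f (Equiv.swap _ p x))))) = x
    rw [Equiv.swap_apply_self, (hf _).1, Equiv.swap_apply_self]
  · intro h
    have h' : Equiv.swap ((none : Option V), (1 : Fin 2)) p
        (f (Equiv.swap ((none : Option V), (1 : Fin 2)) p x)) = x := h
    have h'' := congrArg (Equiv.swap ((none : Option V), (1 : Fin 2)) p) h'
    rw [Equiv.swap_apply_self] at h''
    exact (hf _).2 h''

lemma conj_conj {p : Pt (Option V)} {f : Pt (Option V) → Pt (Option V)} :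
    conj p (conj p f) = f := by
  funext x
  show Equiv.swap _ p (Equiv.swap _ p (f (Equiv.swap _ p (Equiv.swap _ p x)))) = f x
  rw [Equiv.swap_apply_self, Equiv.swap_apply_self]

lemma conj_a0 {p : Pt (Option V)} (hp : p ≠ ((none : Option V), (0 : Fin 2)))
    {f : Pt (Option V) → Pt (Option V)} (hfa : f (none, 0) = p) :
    conj p f (none, 0) = (none, 1) := by
  unfold conj
  rw [Equiv.swap_apply_of_ne_of_ne (by simp) (Ne.symm hp), hfa, Equiv.swap_apply_right]

def stepEquiv : PM (Option V) ≃
    {p : Pt (Option V) // p ≠ ((none : Option V), (0 : Fin 2))} × PM V where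
  toFun f := (⟨f.1 (none, 0), (f.2 (none, 0)).2⟩,
    ⟨restrict (conj (f.1 (none, 0)) f.1),
     restrict_isPM (conj_isPM f.2) (conj_a0 (f.2 (none, 0)).2 rfl)⟩)
  invFun pg := ⟨conj pg.1.1 (ext pg.2.1), conj_isPM (ext_isPM pg.2.2)⟩
  left_inv f := by
    apply Subtype.ext
    show conj _ (ext (restrict (conj (f.1 (none, 0)) f.1))) = f.1
    rw [ext_restrict (conj_isPM f.2) (conj_a0 (f.2 (none, 0)).2 rfl), conj_conj]
  right_inv pg := by
    obtain ⟨⟨p, hp⟩, g⟩ := pg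
    have he : ext g.1 ((none : Option V), (0 : Fin 2)) = (none, 1) := rfl
    have ha : conj p (ext g.1) (none, 0) = p := by
      unfold conj
      rw [Equiv.swap_apply_of_ne_of_ne (by simp) (Ne.symm hp), he, Equiv.swap_apply_left]
    refine Prod.ext (Subtype.ext ha) (Subtype.ext ?_)
    show restrict (conj (conj p (ext g.1) (none, 0)) (conj p (ext g.1))) = g.1
    rw [ha, conj_conj, restrict_ext]

lemma rtg_eq {α β : Type*} {r : α → α → Prop} (F : α → β) (h : ∀ a b, r a b → F a = F b)
    {a b : α} (hab : Relation.ReflTransGen r a b) : F a = F b := by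
  induction hab with
  | refl => rfl
  | tail _ h2 ih => exact ih.trans (h _ _ h2)

omit [DecidableEq V] in
lemma rel_ext_some {g : Pt V → Pt V} {x y : V} :
    Rel (ext g) (some x) (some y) ↔ Rel g x y := by
  constructor
  · rintro ⟨s, t, h⟩
    have h' : (some (g (x, s)).1, (g (x, s)).2) = ((some y : Option V), t) := h
    injection h' with h1 h2
    injection h1 with h1
    exact ⟨s, t, Prod.ext h1 h2⟩
  · rintro ⟨s, t, h⟩
    refine ⟨s, t, ?_⟩
    show (some (g (x, s)).1, (g (x, s)).2) = _
    rw [h]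

omit [DecidableEq V] in
lemma rel_ext_none {g : Pt V → Pt V} {k : Option V} (h : Rel (ext g) none k) : k = none := by
  obtain ⟨s, t, h⟩ := h
  have h' : ((none : Option V), s + 1) = (k, t) := h
  injection h' with h1 _
  exact h1.symm

omit [DecidableEq V] in
lemma not_rel_ext_some_none {g : Pt V → Pt V} {x : V} (h : Rel (ext g) (some x) none) :
    False := by
  obtain ⟨s, t, h⟩ := h
  have h' : (some (g (x, s)).1, (g (x, s)).2) = ((none : Option V), t) := h
  injection h' with h1 _
  cases h1

omit [DecidableEq V] in
lemma comp_ext [Finite V] (g : Pt V → Pt V) : comp (ext g) = comp g + 1 := by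
  have hF : ∀ a b, Rel (ext g) a b →
      Option.map (Quot.mk (Relation.ReflTransGen (Rel g))) a =
      Option.map (Quot.mk (Relation.ReflTransGen (Rel g))) b := by
    intro a b hab
    cases a with
    | none => rw [rel_ext_none hab]
    | some x =>
      cases b with
      | none => exact absurd hab not_rel_ext_some_none
      | some y =>
        show some (Quot.mk _ x) = some (Quot.mk _ y)
        exact congrArg some (Quot.sound (.single (rel_ext_some.mp hab)))
  have E : Quot (Relation.ReflTransGen (Rel (ext g))) ≃
      Option (Quot (Relation.ReflTransGen (Rel g))) := by
    refine ⟨Quot.lift _ (fun a b hab => rtg_eq _ hF hab),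
      fun o => Option.elim o (Quot.mk _ none)
        (Quot.lift (fun x => Quot.mk _ (some x))
          (fun a b hab => Quot.sound (rtg_map some
            (fun a b h => .single (rel_ext_some.mpr h)) hab))), ?_, ?_⟩
    · intro q
      induction q using Quot.ind with | _ a => cases a <;> rfl
    · intro o
      cases o with
      | none => rfl
      | some q => induction q using Quot.ind with | _ x => rfl
  rw [comp, Nat.card_congr E]
  have : Fintype (Quot (Relation.ReflTransGen (Rel g))) := Fintype.ofFinite _
  simp [comp, Nat.card_eq_fintype_card]

lemma conj_a1_eq {g : Pt V → Pt V} :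
    conj ((none : Option V), (1 : Fin 2)) (ext g) = ext g := by
  funext x
  simp [conj, Equiv.swap_self]

section ConjSome

variable [DecidableEq V] {g : Pt V → Pt V} (hg : IsPM g) (w : V) (t : Fin 2)

private lemma sw_fix_a0 :
    Equiv.swap ((none : Option V), (1 : Fin 2)) (some w, t) (none, 0) = (none, 0) :=
  Equiv.swap_apply_of_ne_of_ne (by simp) (by simp)

private lemma sw_fix_emb (x : V) (s : Fin 2) (hx : ((x : V), s) ≠ (w, t)) :
    Equiv.swap ((none : Option V), (1 : Fin 2)) (some w, t) (some x, s) = (some x, s) := by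
  refine Equiv.swap_apply_of_ne_of_ne (by simp) ?_
  intro h
  injection h with h1 h2
  injection h1 with h1
  exact hx (Prod.ext h1 h2)

include hg

private lemma conj_e0 :
    conj ((some w : Option V), t) (ext g) (none, 0) = (some w, t) := by
  show Equiv.swap _ _ (ext g (Equiv.swap _ _ ((none : Option V), (0 : Fin 2)))) = _
  rw [sw_fix_a0]
  show Equiv.swap _ _ ((none : Option V), (1 : Fin 2)) = _
  rw [Equiv.swap_apply_left]

private lemma conj_e2 :
    conj ((some w : Option V), t) (ext g) (some w, t) = (none, 0) := by
  show Equiv.swap _ _ (ext g (Equiv.swap _ _ ((some w : Option V), t))) = _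
  rw [Equiv.swap_apply_right]
  show Equiv.swap _ _ ((none : Option V), (0 : Fin 2)) = _
  rw [sw_fix_a0]

private lemma conj_e1 :
    conj ((some w : Option V), t) (ext g) (none, 1) =
      (some (g (w, t)).1, (g (w, t)).2) := by
  show Equiv.swap _ _ (ext g (Equiv.swap _ _ ((none : Option V), (1 : Fin 2)))) = _
  rw [Equiv.swap_apply_left]
  show Equiv.swap _ _ (some (g (w, t)).1, (g (w, t)).2) = _
  refine Equiv.swap_apply_of_ne_of_ne (by simp) ?_
  intro h
  injection h with h1 h2
  injection h1 with h1
  exact (hg (w, t)).2 (Prod.ext h1 h2)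

private lemma conj_e3 (x : V) (s : Fin 2) (hx : ((x : V), s) ≠ (w, t))
    (hgx : g (x, s) ≠ (w, t)) :
    conj ((some w : Option V), t) (ext g) (some x, s) =
      (some (g (x, s)).1, (g (x, s)).2) := by
  show Equiv.swap _ _ (ext g (Equiv.swap _ _ ((some x : Option V), s))) = _
  rw [sw_fix_emb w t x s hx]
  show Equiv.swap _ _ (some (g (x, s)).1, (g (x, s)).2) = _
  refine Equiv.swap_apply_of_ne_of_ne (by simp) ?_
  intro h
  injection h with h1 h2
  injection h1 with h1
  exact hgx (Prod.ext h1 h2)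

private lemma conj_e4 (x : V) (s : Fin 2) (hgx : g (x, s) = (w, t)) :
    conj ((some w : Option V), t) (ext g) (some x, s) = (none, 1) := by
  have hx : ((x : V), s) ≠ (w, t) := by
    intro h
    rw [h] at hgx
    exact (hg (w, t)).2 hgx
  show Equiv.swap _ _ (ext g (Equiv.swap _ _ ((some x : Option V), s))) = _
  rw [sw_fix_emb w t x s hx]
  show Equiv.swap _ _ (some (g (x, s)).1, (g (x, s)).2) = _
  rw [hgx]
  exact Equiv.swap_apply_right _ _

private lemma comp_conj_some [Finite V] :
    comp (conj ((some w : Option V), t) (ext g)) = comp g := by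
  have e0 := conj_e0 hg w t
  have e1 := conj_e1 hg w t
  have e2 := conj_e2 hg w t
  refine card_quot_eq (fun o => o.getD w) some ?_ ?_ ?_ ?_
  · rintro j k ⟨s, u, hjk⟩
    cases j with
    | none =>
      fin_cases s
      · have hv := (e0.symm.trans hjk)
        injection hv with hk hu
        subst hk
        exact .refl
      · have hv := (e1.symm.trans hjk)
        injection hv with hk hu
        subst hk
        exact .single ⟨t, (g (w, t)).2, rfl⟩
    | some x =>
      by_cases hx : ((x : V), s) = (w, t)
      · injection hx with hx1 hx2
        have e2' : conj ((some w : Option V), t) (ext g) (some x, s) = (none, 0) := by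
          rw [hx1, hx2]; exact e2
        have hv := (e2'.symm.trans hjk)
        injection hv with hk hu
        subst hk
        show Relation.ReflTransGen (Rel g) x w
        rw [hx1]
      · by_cases hgx : g (x, s) = (w, t)
        · have hv := ((conj_e4 hg w t x s hgx).symm.trans hjk)
          injection hv with hk hu
          subst hk
          exact .single ⟨s, t, hgx⟩
        · have hv := ((conj_e3 hg w t x s hx hgx).symm.trans hjk)
          injection hv with hk hu
          subst hk
          exact .single ⟨s, (g (x, s)).2, rfl⟩
  · rintro x y ⟨s, u, hxy⟩
    by_cases hx : ((x : V), s) = (w, t)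
    · injection hx with hx1 hx2
      have step1 : Rel (conj ((some w : Option V), t) (ext g)) (some x) none :=
        ⟨s, 0, by rw [hx1, hx2]; exact e2⟩
      have step2 : Rel (conj ((some w : Option V), t) (ext g)) none (some y) :=
        ⟨1, u, by rw [e1, ← hx1, ← hx2, hxy]⟩
      exact Relation.ReflTransGen.head step1 (.single step2)
    · by_cases hgx : g (x, s) = (w, t)
      · have hyu := hxy.symm.trans hgx
        injection hyu with hy hu
        have step1 : Rel (conj ((some w : Option V), t) (ext g)) (some x) none :=
          ⟨s, 1, conj_e4 hg w t x s hgx⟩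
        have step2 : Rel (conj ((some w : Option V), t) (ext g)) none (some y) :=
          ⟨0, t, by rw [hy]; exact e0⟩
        exact Relation.ReflTransGen.head step1 (.single step2)
      · exact .single ⟨s, u, by rw [conj_e3 hg w t x s hx hgx, hxy]⟩
  · intro j
    cases j with
    | none => exact .single ⟨t, 0, e2⟩
    | some x => exact .refl
  · intro x
    exact .refl

end ConjSome

section Transport

variable {α β : Type*}

lemma isPM_conjEquiv (σ : Pt α ≃ Pt β) {f : Pt α → Pt α} (hf : IsPM f) :
    IsPM (fun y => σ (f (σ.symm y))) := by
  intro y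
  constructor
  · show σ (f (σ.symm (σ (f (σ.symm y))))) = y
    rw [Equiv.symm_apply_apply, (hf _).1, Equiv.apply_symm_apply]
  · intro h
    have h2 := congrArg σ.symm h
    rw [Equiv.symm_apply_apply] at h2
    exact (hf _).2 h2

def pmapEquiv (e : α ≃ β) : PM α ≃ PM β := by
  refine Equiv.subtypeEquiv
    (Equiv.arrowCongr (e.prodCongr (Equiv.refl (Fin 2))) (e.prodCongr (Equiv.refl (Fin 2)))) ?_
  intro f
  set pe := e.prodCongr (Equiv.refl (Fin 2)) with hpe
  constructor
  · intro hf
    exact isPM_conjEquiv pe hf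
  · intro hf
    have h2 := isPM_conjEquiv pe.symm hf
    have h3 : (fun y => pe.symm ((Equiv.arrowCongr pe pe f) (pe.symm.symm y))) = f := by
      funext y
      simp
    rwa [h3] at h2

lemma comp_pmapEquiv (e : α ≃ β) (f : PM α) :
    comp ((pmapEquiv e f).1 : Pt β → Pt β) = comp f.1 := by
  have hval : ((pmapEquiv e f).1 : Pt β → Pt β) =
      fun y => (e (f.1 (e.symm y.1, y.2)).1, (f.1 (e.symm y.1, y.2)).2) := rfl
  rw [hval]
  refine card_quot_eq e.symm e ?_ ?_ ?_ ?_
  · rintro j k ⟨s, u, h⟩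
    have h' : (e (f.1 (e.symm j, s)).1, (f.1 (e.symm j, s)).2) = (k, u) := h
    injection h' with h1 h2
    have h3 : (f.1 (e.symm j, s)).1 = e.symm k := by rw [← h1, Equiv.symm_apply_apply]
    exact .single ⟨s, u, Prod.ext h3 h2⟩
  · rintro x y ⟨s, u, h⟩
    refine .single ⟨s, u, ?_⟩
    show (e (f.1 (e.symm (e x), s)).1, (f.1 (e.symm (e x), s)).2) = (e y, u)
    rw [Equiv.symm_apply_apply, h]
  · intro j
    rw [Equiv.apply_symm_apply]
  · intro x
    rw [Equiv.symm_apply_apply]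

end Transport

section OptionCount

variable [Fintype V] [DecidableEq V]

lemma card_PM_option : Nat.card (PM (Option V)) = (2 * Fintype.card V + 1) * Nat.card (PM V) := by
  rw [Nat.card_congr (stepEquiv (V := V)), Nat.card_prod]
  congr 1
  rw [Nat.card_eq_fintype_card, card_ne_point]

lemma comp_inv_step (pg : {p : Pt (Option V) // p ≠ ((none : Option V), (0 : Fin 2))} × PM V) :
    comp ((stepEquiv.symm pg).1 : Pt (Option V) → Pt (Option V)) =
      comp pg.2.1 + (if pg.1 = ⟨((none : Option V), (1 : Fin 2)), by simp⟩ then 1 else 0) := by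
  obtain ⟨⟨⟨o, s⟩, hp⟩, g⟩ := pg
  have hval : ((stepEquiv.symm (⟨(o, s), hp⟩, g)).1 : Pt (Option V) → Pt (Option V)) =
      conj (o, s) (ext g.1) := rfl
  rw [hval]
  cases o with
  | none =>
    rcases fin2_cases s with rfl | rfl
    · exact absurd rfl hp
    · rw [conj_a1_eq, comp_ext, if_pos rfl]
  | some w =>
    rw [comp_conj_some g.2 w s, if_neg (by simp)]
    rfl

lemma sum_comp_option :
    ∑ f : PM (Option V), comp f.1 =
      Nat.card (PM V) + (2 * Fintype.card V + 1) * ∑ g : PM V, comp g.1 := by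
  rw [← Equiv.sum_comp (stepEquiv (V := V)).symm (fun f : PM (Option V) => comp f.1)]
  rw [Finset.sum_congr rfl (fun pg _ => comp_inv_step pg)]
  rw [Finset.sum_add_distrib]
  rw [Fintype.sum_prod_type, Fintype.sum_prod_type]
  have h1 : ∑ p : {p : Pt (Option V) // p ≠ ((none : Option V), (0 : Fin 2))},
      ∑ g : PM V, comp g.1 = (2 * Fintype.card V + 1) * ∑ g : PM V, comp g.1 := by
    rw [Finset.sum_const, smul_eq_mul]
    congr 1
    rw [Finset.card_univ, card_ne_point]
  have h2 : ∑ p : {p : Pt (Option V) // p ≠ ((none : Option V), (0 : Fin 2))},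
      ∑ _g : PM V, (if p = ⟨((none : Option V), (1 : Fin 2)), by simp⟩ then 1 else 0) =
        Nat.card (PM V) := by
    have : ∀ p : {p : Pt (Option V) // p ≠ ((none : Option V), (0 : Fin 2))},
        ∑ _g : PM V, (if p = ⟨((none : Option V), (1 : Fin 2)), by simp⟩ then 1 else 0) =
        (if p = ⟨((none : Option V), (1 : Fin 2)), by simp⟩ then Nat.card (PM V) else 0) := by
      intro p
      by_cases hp : p = ⟨((none : Option V), (1 : Fin 2)), by simp⟩
      · rw [if_pos hp]
        simp only [hp, if_pos rfl]
        rw [Finset.sum_const, smul_eq_mul, mul_one, Nat.card_eq_fintype_card]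
        rfl
      · simp only [if_neg hp, Finset.sum_const_zero]
    rw [Finset.sum_congr rfl (fun p _ => this p), Finset.sum_ite_eq' Finset.univ]
    simp
  rw [h1, h2, add_comm]

end OptionCount

section FinLevel

noncomputable def Sn (n : ℕ) : ℕ := ∑ f : PM (Fin n), comp f.1

noncomputable def Nn (n : ℕ) : ℕ := Nat.card (PM (Fin n))

lemma Nn_zero : Nn 0 = 1 := by
  have : Unique (PM (Fin 0)) :=
    ⟨⟨⟨id, fun x => x.1.elim0⟩⟩, fun f => Subtype.ext (funext (fun x => x.1.elim0))⟩
  rw [Nn, Nat.card_unique]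

lemma Sn_zero : Sn 0 = 0 := by
  rw [Sn]
  apply Finset.sum_eq_zero
  intro f _
  rw [comp]
  have : IsEmpty (Quot (Relation.ReflTransGen (Rel f.1))) :=
    ⟨fun q => (Quot.exists_rep q).elim (fun a _ => a.elim0)⟩
  exact Nat.card_of_isEmpty

lemma Nn_succ (n : ℕ) : Nn (n + 1) = (2 * n + 1) * Nn n := by
  rw [Nn, Nat.card_congr (pmapEquiv (finSuccEquiv n)), Nn]
  have := card_PM_option (V := Fin n)
  rwa [Fintype.card_fin] at this

lemma Sn_succ (n : ℕ) : Sn (n + 1) = Nn n + (2 * n + 1) * Sn n := by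
  have h1 : Sn (n + 1) = ∑ h : PM (Option (Fin n)), comp h.1 := by
    rw [Sn, ← Equiv.sum_comp (pmapEquiv (finSuccEquiv n))
      (fun h : PM (Option (Fin n)) => comp h.1)]
    exact Finset.sum_congr rfl (fun f _ => (comp_pmapEquiv _ f).symm)
  rw [h1, sum_comp_option, Fintype.card_fin, Nn, Sn]

lemma Nn_pos (n : ℕ) : 0 < Nn n := by
  induction n with
  | zero => rw [Nn_zero]; omega
  | succ n ih => rw [Nn_succ]; exact Nat.mul_pos (by omega) ih

lemma ratio (n : ℕ) :
    (Sn n : ℝ) = (Nn n : ℝ) * ∑ i ∈ Finset.range n, (1 : ℝ) / (2 * (i : ℝ) + 1) := by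
  induction n with
  | zero => simp [Sn_zero, Nn_zero]
  | succ n ih =>
    have hpos : (0 : ℝ) < 2 * (n : ℝ) + 1 := by positivity
    rw [Sn_succ, Nn_succ, Finset.sum_range_succ]
    push_cast
    rw [ih]
    field_simp
    ring

end FinLevel

section Bridge

variable (n : ℕ)

abbrev Gr (n : ℕ) := {M' : SimpleGraph (Fin n × Fin 2) //
  ∀ p : Fin n × Fin 2, (M'.neighborSet p).ncard = 1}

noncomputable def toFn (M : Gr n) : Pt (Fin n) → Pt (Fin n) :=
  fun p => (Set.ncard_eq_one.mp (M.2 p)).choose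

lemma toFn_spec (M : Gr n) (p : Pt (Fin n)) :
    M.1.neighborSet p = {toFn n M p} := (Set.ncard_eq_one.mp (M.2 p)).choose_spec

lemma adj_iff (M : Gr n) (p q : Pt (Fin n)) : M.1.Adj p q ↔ toFn n M p = q := by
  constructor
  · intro h
    have hq : q ∈ M.1.neighborSet p := h
    rw [toFn_spec] at hq
    exact (Set.mem_singleton_iff.mp hq).symm
  · intro h
    have hq : q ∈ M.1.neighborSet p := by
      rw [toFn_spec n M p]
      exact Set.mem_singleton_iff.mpr h.symm
    exact hq

lemma toFn_isPM (M : Gr n) : IsPM (toFn n M) := by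
  intro p
  have h1 : M.1.Adj p (toFn n M p) := (adj_iff n M p _).mpr rfl
  constructor
  · exact (adj_iff n M _ p).mp h1.symm
  · intro h
    rw [h] at h1
    exact M.1.loopless.irrefl p h1

def ofFn (f : PM (Fin n)) : Gr n := by
  refine ⟨⟨fun p q => f.1 p = q, ?_, ?_⟩, ?_⟩
  · refine ⟨fun p q h => ?_⟩
    show f.1 q = p
    rw [← h, (f.2 p).1]
  · refine ⟨fun p h => ?_⟩
    exact (f.2 p).2 h
  · intro p
    have h2 : {q | f.1 p = q} = {f.1 p} := Set.ext fun q => eq_comm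
    show ({q | f.1 p = q} : Set (Pt (Fin n))).ncard = 1
    rw [h2]
    exact Set.ncard_singleton _

noncomputable def graphEquiv : Gr n ≃ PM (Fin n) where
  toFun M := ⟨toFn n M, toFn_isPM n M⟩
  invFun f := ofFn n f
  left_inv M := by
    apply Subtype.ext
    ext p q
    exact ⟨fun h => (adj_iff n M p q).mpr h, fun h => (adj_iff n M p q).mp h⟩
  right_inv f := by
    apply Subtype.ext
    funext p
    have h := toFn_spec n (ofFn n f) p
    have h2 : (ofFn n f).1.neighborSet p = {f.1 p} := Set.ext fun q => eq_comm
    rw [h2] at h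
    exact (Set.singleton_eq_singleton_iff.mp h).symm

lemma rel_eq (M : Gr n) :
    (fun j k : Fin n => ∃ s t : Fin 2, M.1.Adj (j, s) (k, t)) = Rel (toFn n M) := by
  funext j k
  apply propext
  constructor
  · rintro ⟨s, t, h⟩; exact ⟨s, t, (adj_iff n M _ _).mp h⟩
  · rintro ⟨s, t, h⟩; exact ⟨s, t, (adj_iff n M _ _).mpr h⟩

end Bridge

lemma part1 (n : ℕ) :
    (∑ᶠ M : Gr n, (Nat.card (Quot (Relation.ReflTransGen
        (fun j k : Fin n => ∃ s t : Fin 2, M.1.Adj (j, s) (k, t)))) : ℝ)) /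
      (Nat.card (Gr n) : ℝ) = ∑ i ∈ Finset.range n, (1 : ℝ) / (2 * (i : ℝ) + 1) := by
  haveI : Finite (SimpleGraph (Fin n × Fin 2)) :=
    Finite.of_injective (fun G => G.Adj) (fun a b h => SimpleGraph.ext h)
  haveI : Finite (Gr n) := Subtype.finite
  haveI : Fintype (Gr n) := Fintype.ofFinite _
  rw [finsum_eq_sum_of_fintype]
  have hpt : ∀ M : Gr n, (Nat.card (Quot (Relation.ReflTransGen
      (fun j k : Fin n => ∃ s t : Fin 2, M.1.Adj (j, s) (k, t)))) : ℝ)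
      = (comp ((graphEquiv n M).1) : ℝ) := by
    intro M
    rw [comp]
    norm_cast
    rw [rel_eq n M]
    rfl
  rw [Finset.sum_congr rfl (fun M _ => hpt M)]
  have hs : ∑ M : Gr n, (comp ((graphEquiv n M).1) : ℝ) = (Sn n : ℝ) := by
    rw [Sn]
    push_cast
    rw [Equiv.sum_comp (graphEquiv n) (fun f : PM (Fin n) => (comp f.1 : ℝ))]
  rw [hs, Nat.card_congr (graphEquiv n), ratio n]
  have hN : (Nat.card (PM (Fin n)) : ℝ) = (Nn n : ℝ) := rfl
  rw [hN]
  exact mul_div_cancel_left₀ _ (Nat.cast_ne_zero.mpr (Nn_pos n).ne')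

lemma part2 (n : ℕ) (hn : 3 ≤ n) :
    (∑ i ∈ Finset.range n, (1 : ℝ) / (2 * (i : ℝ) + 1)) ≤ 2 * Real.log n := by
  obtain ⟨m, rfl⟩ : ∃ m, n = m + 1 := ⟨n - 1, by omega⟩
  have hterm : ∀ i : ℕ, (1 : ℝ) / (2 * ((i : ℝ) + 1) + 1) ≤
      Real.log ((i : ℝ) + 1 + 1) - Real.log ((i : ℝ) + 1) := by
    intro i
    have hi : (0 : ℝ) ≤ (i : ℝ) := Nat.cast_nonneg i
    have hx : (0 : ℝ) < ((i : ℝ) + 1 + 1) / ((i : ℝ) + 1) := by positivity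
    have h2 := Real.one_sub_inv_le_log_of_pos hx
    have h3 : Real.log (((i : ℝ) + 1 + 1) / ((i : ℝ) + 1)) =
        Real.log ((i : ℝ) + 1 + 1) - Real.log ((i : ℝ) + 1) :=
      Real.log_div (by positivity) (by positivity)
    have h4 : 1 - (((i : ℝ) + 1 + 1) / ((i : ℝ) + 1))⁻¹ = 1 / ((i : ℝ) + 2) := by
      rw [inv_div]
      field_simp
      ring
    have h5 : (1 : ℝ) / (2 * ((i : ℝ) + 1) + 1) ≤ 1 / ((i : ℝ) + 2) := by
      apply one_div_le_one_div_of_le (by positivity)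
      linarith
    calc (1 : ℝ) / (2 * ((i : ℝ) + 1) + 1) ≤ 1 / ((i : ℝ) + 2) := h5
      _ = 1 - (((i : ℝ) + 1 + 1) / ((i : ℝ) + 1))⁻¹ := h4.symm
      _ ≤ Real.log (((i : ℝ) + 1 + 1) / ((i : ℝ) + 1)) := h2
      _ = _ := h3
  have htel := Finset.sum_range_sub (fun i : ℕ => Real.log ((i : ℝ) + 1)) m
  push_cast at htel
  have hlog1 : (1 : ℝ) ≤ Real.log ((m : ℝ) + 1) := by
    rw [Real.le_log_iff_exp_le (by positivity)]
    have h3 : (3 : ℝ) ≤ (m : ℝ) + 1 := by exact_mod_cast hn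
    have := Real.exp_one_lt_d9
    linarith
  have hcast : ((m + 1 : ℕ) : ℝ) = (m : ℝ) + 1 := by push_cast; ring
  rw [hcast]
  calc ∑ i ∈ Finset.range (m + 1), (1 : ℝ) / (2 * (i : ℝ) + 1)
      = (∑ i ∈ Finset.range m, (1 : ℝ) / (2 * ((i : ℝ) + 1) + 1)) + 1 := by
        rw [Finset.sum_range_succ']
        congr 1
        · apply Finset.sum_congr rfl
          intro i _
          push_cast
          ring_nf
        · norm_num
      _ ≤ (∑ i ∈ Finset.range m, (Real.log ((i : ℝ) + 1 + 1) - Real.log ((i : ℝ) + 1))) + 1 := by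
        have := Finset.sum_le_sum (fun i (_ : i ∈ Finset.range m) => hterm i)
        linarith
      _ = Real.log ((m : ℝ) + 1) + 1 := by
        rw [htel]
        simp [Real.log_one]
      _ ≤ 2 * Real.log ((m : ℝ) + 1) := by linarith

end Stmt17

/-- For a uniformly random perfect matching `M` of the `2n`-point set `[n] × {1, 2}` (viewed
as a simple graph in which every point has exactly one neighbour), consider the relation on
`[n]` relating `j` and `k` whenever `M` matches some point `(j, s)` with some point `(k, t)`.
The expected number of equivalence classes of the reflexive-transitive closure of this
relation (i.e. of connected components of the multigraph on `[n]` induced by `M`) equals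
`∑_{i=1}^{n} 1/(2i − 1)`, and this sum is at most `2 log n` for all sufficiently large `n`. -/
theorem stmt17 :
    (∀ n : ℕ, 1 ≤ n →
      (∑ᶠ M : {M' : SimpleGraph (Fin n × Fin 2) //
            ∀ p : Fin n × Fin 2, (M'.neighborSet p).ncard = 1},
          (Nat.card (Quot (Relation.ReflTransGen
            (fun j k : Fin n => ∃ s t : Fin 2, M.1.Adj (j, s) (k, t)))) : ℝ)) /
        (Nat.card {M' : SimpleGraph (Fin n × Fin 2) //
            ∀ p : Fin n × Fin 2, (M'.neighborSet p).ncard = 1} : ℝ)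
      = ∑ i ∈ Finset.range n, (1 : ℝ) / (2 * (i : ℝ) + 1)) ∧
    ∃ n₀ : ℕ, ∀ n ≥ n₀,
      (∑ i ∈ Finset.range n, (1 : ℝ) / (2 * (i : ℝ) + 1)) ≤ 2 * Real.log n := by
  constructor
  · intro n _
    exact Stmt17.part1 n
  · exact ⟨3, fun n hn => Stmt17.part2 n hn⟩
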